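/- Let A_i : X_i → Y_i (i ∈ I) be operators with sup_i ‖A_i‖ < ∞, and let A be the induced operator on the c₀(I)-direct sums, A : (⊕ X_i)_{c₀} → (⊕ Y_i)_{c₀}, A|_{X_i} = A_i. Then t_∞(A) ≤ sup_{i∈I} max{t_∞(A_i), ‖A_i‖}. -/

import Mathlib

open Filter
open scoped Classical ENNReal NNReal

/-- A net in `X`: a function to `X` from a nonempty directed preorder. -/
structure Net (X : Type*) where
  ι : Type
  pre : Preorder ι
  dir : IsDirected ι fun a b => pre.le a b
  ne : Nonempty ι
  toFun : ι → X

/-- The `atTop` filter of the index set of a net, along which limits are taken. -/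
def Net.F {X : Type*} (N : Net X) : Filter N.ι := @Filter.atTop _ N.pre

variable {X Y : Type*} [NormedAddCommGroup X] [NormedSpace ℝ X]
  [NormedAddCommGroup Y] [NormedSpace ℝ Y]

/-- A net in a normed space is weakly null if it converges to `0` in the weak topology,
i.e. `f (x_λ) → 0` for every continuous linear functional `f`. -/
def WeaklyNullNet (N : Net X) : Prop :=
  ∀ f : X →L[ℝ] ℝ, Tendsto (fun i => f (N.toFun i)) N.F (nhds 0)

/-- The net takes values in the ball of radius `σ`. -/
def NetInBall (N : Net X) (σ : ℝ) : Prop := ∀ i, ‖N.toFun i‖ ≤ σ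

/-- The modulus of asymptotic uniform smoothness of an operator `A : X → Y`:
`ρ(σ, A) = sup { limsup_λ ‖y + A x_λ‖ - 1 }` over `y ∈ B_Y` and weakly null nets
`(x_λ) ⊆ σ B_X`, with `ρ(σ, A) = 0` for the zero operator. -/
noncomputable def rho (A : X →L[ℝ] Y) (σ : ℝ) : ℝ :=
  if A = 0 then 0 else
    sSup {r : ℝ | ∃ (N : Net X) (y : Y), ‖y‖ ≤ 1 ∧ NetInBall N σ ∧ WeaklyNullNet N ∧
      r = Filter.limsup (fun i => ‖y + A (N.toFun i)‖) N.F - 1}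

/-- `tInf A` (the quantity `t_∞(A)`) is the infimum (in `ℝ≥0∞`, so `∞` if no such
constant exists) of the constants `C > 0` such that for every `y ∈ Y`, every `σ > 0`,
and every weakly null net `(x_λ) ⊆ σ B_X`,
`limsup_λ ‖y + A x_λ‖ ≤ max (‖y‖) (C σ)`. -/
noncomputable def tInf (A : X →L[ℝ] Y) : ℝ≥0∞ :=
  sInf (ENNReal.ofReal '' {C : ℝ | 0 < C ∧ ∀ (y : Y) (σ : ℝ), 0 < σ →
    ∀ N : Net X, NetInBall N σ → WeaklyNullNet N →
      Filter.limsup (fun i => ‖y + A (N.toFun i)‖) N.F ≤ max ‖y‖ (C * σ)})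

instance : Fact ((1 : ℝ≥0∞) ≤ ⊤) := ⟨le_top⟩

/-- The `c₀(I)`-direct sum of a family of normed spaces, realized as the subspace of
the `ℓ_∞`-direct sum consisting of those `x` with `{i : ε ≤ ‖x i‖}` finite for every
`ε > 0`. -/
noncomputable def c0Sum {I : Type} (E : I → Type) [∀ i, NormedAddCommGroup (E i)]
    [∀ i, NormedSpace ℝ (E i)] : Submodule ℝ (lp E ⊤) where
  carrier := {x | ∀ ε : ℝ, 0 < ε → {i : I | ε ≤ ‖(x : ∀ i, E i) i‖}.Finite}
  zero_mem' := by
    intro ε hε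
    refine Set.Finite.subset (Set.finite_empty) ?_
    intro i hi
    simp only [Set.mem_setOf_eq, lp.coeFn_zero, Pi.zero_apply, norm_zero] at hi
    exact absurd hi (by linarith)
  add_mem' := by
    intro a b ha hb ε hε
    refine Set.Finite.subset (Set.Finite.union (ha (ε / 2) (by linarith))
      (hb (ε / 2) (by linarith))) ?_
    intro i hi
    simp only [Set.mem_setOf_eq, lp.coeFn_add, Pi.add_apply] at hi
    simp only [Set.mem_union, Set.mem_setOf_eq]
    by_contra hc
    push_neg at hc
    have hn := norm_add_le ((a : ∀ i, E i) i) ((b : ∀ i, E i) i)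
    linarith [hc.1, hc.2]
  smul_mem' := by
    intro c x hx ε hε
    refine Set.Finite.subset (hx (ε / (‖c‖ + 1)) (by positivity)) ?_
    intro i hi
    simp only [Set.mem_setOf_eq, lp.coeFn_smul, Pi.smul_apply, norm_smul] at hi
    simp only [Set.mem_setOf_eq]
    rw [div_le_iff₀ (by positivity : (0:ℝ) < ‖c‖ + 1)]
    nlinarith [norm_nonneg ((x : ∀ i, E i) i), norm_nonneg c]

/-- The coordinate projection `c0Sum E → E i` as a continuous linear map. -/
noncomputable def c0Coord {I : Type} (E : I → Type) [∀ i, NormedAddCommGroup (E i)]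
    [∀ i, NormedSpace ℝ (E i)] (i : I) : c0Sum E →L[ℝ] E i :=
  LinearMap.mkContinuous
    { toFun := fun x => ((x : lp E ⊤) : ∀ j, E j) i
      map_add' := fun x y => by
        simp only [Submodule.coe_add, lp.coeFn_add, Pi.add_apply]
      map_smul' := fun c x => by
        simp only [Submodule.coe_smul, lp.coeFn_smul, Pi.smul_apply, RingHom.id_apply] }
    1 (fun x => by
      simp only [one_mul]; exact lp.norm_apply_le_norm ENNReal.top_ne_zero (x : lp E ⊤) i)

theorem c0Coord_norm_le {I : Type} (E : I → Type) [∀ i, NormedAddCommGroup (E i)]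
    [∀ i, NormedSpace ℝ (E i)] (i : I) (x : c0Sum E) :
    ‖((x : lp E ⊤) : ∀ j, E j) i‖ ≤ ‖x‖ :=
  lp.norm_apply_le_norm ENNReal.top_ne_zero (x : lp E ⊤) i

/-- For a uniformly bounded family of operators `A_i : X_i → Y_i`, the induced
diagonal operator `A` between the `c₀(I)`-direct sums satisfies
`t_∞(A) ≤ sup_i max (t_∞(A_i), ‖A_i‖)`. -/
theorem tInf_c0_sum {I : Type} [Nonempty I] (E : I → Type) (F : I → Type)
    [∀ i, NormedAddCommGroup (E i)] [∀ i, NormedSpace ℝ (E i)]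
    [∀ i, NormedAddCommGroup (F i)] [∀ i, NormedSpace ℝ (F i)]
    (T : ∀ i, E i →L[ℝ] F i) (hbd : BddAbove (Set.range fun i => ‖T i‖))
    (A : c0Sum E →L[ℝ] c0Sum F)
    (hA : ∀ (x : c0Sum E) (i : I),
      ((A x : lp F ⊤) : ∀ i, F i) i = T i (((x : lp E ⊤) : ∀ i, E i) i)) :
    tInf A ≤ ⨆ i : I, max (tInf (T i)) (ENNReal.ofReal ‖T i‖) := by
  set R := ⨆ i : I, max (tInf (T i)) (ENNReal.ofReal ‖T i‖) with hRdef
  refine le_of_forall_gt_imp_ge_of_dense fun b hb => ?_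
  rcases eq_or_ne b ⊤ with rfl | hbtop
  · exact le_top
  -- the constant
  set C : ℝ := b.toReal with hCdef
  have hb0 : (0 : ℝ≥0∞) < b := lt_of_le_of_lt (zero_le (a := R)) hb
  have hC0 : 0 < C := ENNReal.toReal_pos hb0.ne' hbtop
  have hbC : ENNReal.ofReal C = b := ENNReal.ofReal_toReal hbtop
  -- each ‖T i‖ is < C
  have hTi : ∀ i, ‖T i‖ ≤ C := by
    intro i
    have h1 : ENNReal.ofReal ‖T i‖ < ENNReal.ofReal C := by
      rw [hbC]
      exact lt_of_le_of_lt (le_trans (le_max_right _ _)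
        (le_iSup (fun i => max (tInf (T i)) (ENNReal.ofReal ‖T i‖)) i)) hb
    exact le_of_lt ((ENNReal.ofReal_lt_ofReal_iff hC0).mp h1)
  -- each tInf (T i) admits a constant Ci ≤ C
  have hCi : ∀ i, ∃ Ci : ℝ, 0 < Ci ∧ Ci ≤ C ∧
      ∀ (y : F i) (σ : ℝ), 0 < σ → ∀ N : Net (E i), NetInBall N σ → WeaklyNullNet N →
        Filter.limsup (fun l => ‖y + (T i) (N.toFun l)‖) N.F ≤ max ‖y‖ (Ci * σ) := by
    intro i
    have h1 : tInf (T i) < ENNReal.ofReal C := by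
      rw [hbC]
      exact lt_of_le_of_lt (le_trans (le_max_left _ _)
        (le_iSup (fun i => max (tInf (T i)) (ENNReal.ofReal ‖T i‖)) i)) hb
    rw [tInf] at h1
    obtain ⟨a, ha, halt⟩ := sInf_lt_iff.mp h1
    obtain ⟨Ci, ⟨hCi0, hCiprop⟩, rfl⟩ := ha
    refine ⟨Ci, hCi0, ?_, hCiprop⟩
    exact le_of_lt ((ENNReal.ofReal_lt_ofReal_iff hC0).mp halt)
  choose Ci hCi0 hCiC hCiprop using hCi
  -- membership in the defining set of `tInf A`
  rw [← hbC]
  refine sInf_le ⟨C, ⟨hC0, ?_⟩, rfl⟩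
  intro y σ hσ N hball hwn
  set M : ℝ := max ‖y‖ (C * σ) with hMdef
  letI := N.pre
  haveI : N.F.NeBot := Filter.atTop_neBot_iff.mpr ⟨N.ne, N.dir⟩
  -- boundedness facts
  have hbound : ∀ l, ‖y + A (N.toFun l)‖ ≤ ‖y‖ + ‖A‖ * σ := by
    intro l
    refine le_trans (norm_add_le _ _) (add_le_add le_rfl ?_)
    exact le_trans ((A).le_opNorm _) (mul_le_mul_of_nonneg_left (hball l) (norm_nonneg A))
  have hcobdd : N.F.IsCoboundedUnder (· ≤ ·) (fun l => ‖y + A (N.toFun l)‖) :=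
    Filter.isCoboundedUnder_le_of_le N.F (x := 0) fun l => norm_nonneg _
  -- coordinate nets
  have hcoord : ∀ i : I, ∀ l, ‖(((N.toFun l : c0Sum E) : lp E ⊤) : ∀ j, E j) i‖ ≤ σ :=
    fun i l => le_trans (c0Coord_norm_le E i (N.toFun l)) (hball l)
  -- key: per-coordinate limsup estimate
  have keylim : ∀ i : I,
      Filter.limsup (fun l => ‖((y : lp F ⊤) : ∀ j, F j) i +
        (T i) ((((N.toFun l : c0Sum E) : lp E ⊤) : ∀ j, E j) i)‖) N.F ≤ M := by
    intro i
    set Ni : Net (E i) :=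
      ⟨N.ι, N.pre, N.dir, N.ne, fun l => (((N.toFun l : c0Sum E) : lp E ⊤) : ∀ j, E j) i⟩
      with hNi
    have hNiball : NetInBall Ni σ := fun l => hcoord i l
    have hNiwn : WeaklyNullNet Ni := by
      intro f
      exact hwn (f.comp (c0Coord E i))
    have h1 := hCiprop i (((y : lp F ⊤) : ∀ j, F j) i) σ hσ Ni hNiball hNiwn
    refine le_trans h1 (max_le (le_trans ?_ (le_max_left _ _)) (le_trans ?_ (le_max_right _ _)))
    · exact lp.norm_apply_le_norm ENNReal.top_ne_zero (y : lp F ⊤) i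
    · exact mul_le_mul_of_nonneg_right (hCiC i) (le_of_lt hσ)
  have keybdd : ∀ i : I, N.F.IsBoundedUnder (· ≤ ·)
      (fun l => ‖((y : lp F ⊤) : ∀ j, F j) i +
        (T i) ((((N.toFun l : c0Sum E) : lp E ⊤) : ∀ j, E j) i)‖) := by
    intro i
    refine Filter.isBoundedUnder_of ⟨‖y‖ + C * σ, fun l => ?_⟩
    refine le_trans (norm_add_le _ _) (add_le_add
      (lp.norm_apply_le_norm ENNReal.top_ne_zero (y : lp F ⊤) i) ?_)
    exact le_trans ((T i).le_opNorm _)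
      (mul_le_mul (hTi i) (hcoord i l) (norm_nonneg _) hC0.le)
  -- reduce to: limsup ≤ c for every c > M
  refine le_of_forall_gt_imp_ge_of_dense fun c hc => ?_
  set ε : ℝ := c - M with hεdef
  have hε : 0 < ε := sub_pos.mpr hc
  -- the finite "large coordinates" set of y
  have hfin : {i : I | ε ≤ ‖((y : lp F ⊤) : ∀ j, F j) i‖}.Finite := y.2 ε hε
  -- eventually all large coordinates are small
  have hev : ∀ᶠ l in N.F, ∀ i ∈ {i : I | ε ≤ ‖((y : lp F ⊤) : ∀ j, F j) i‖},
      ‖((y : lp F ⊤) : ∀ j, F j) i +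
        (T i) ((((N.toFun l : c0Sum E) : lp E ⊤) : ∀ j, E j) i)‖ < M + ε := by
    refine (Filter.eventually_all_finite hfin).mpr fun i _ => ?_
    exact Filter.eventually_lt_of_limsup_lt
      (lt_of_le_of_lt (keylim i) (by linarith)) (keybdd i)
  refine Filter.limsup_le_of_le hcobdd ?_
  filter_upwards [hev] with l hl
  have hcoe : ∀ i : I, (((y + A (N.toFun l) : c0Sum F) : lp F ⊤) : ∀ j, F j) i =
      ((y : lp F ⊤) : ∀ j, F j) i +
        (T i) ((((N.toFun l : c0Sum E) : lp E ⊤) : ∀ j, E j) i) := by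
    intro i
    have : (((y + A (N.toFun l) : c0Sum F) : lp F ⊤) : ∀ j, F j) i =
        ((y : lp F ⊤) : ∀ j, F j) i + (((A (N.toFun l) : lp F ⊤) : ∀ j, F j) i) := by
      simp only [Submodule.coe_add, lp.coeFn_add, Pi.add_apply]
    rw [this, hA]
  have hnorm : ‖y + A (N.toFun l)‖ =
      ⨆ i : I, ‖(((y + A (N.toFun l) : c0Sum F) : lp F ⊤) : ∀ j, F j) i‖ :=
    lp.norm_eq_ciSup _
  rw [show c = M + ε by rw [hεdef]; ring, hnorm]
  refine ciSup_le fun i => ?_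
  rw [hcoe i]
  by_cases hi : ε ≤ ‖((y : lp F ⊤) : ∀ j, F j) i‖
  · exact le_of_lt (hl i hi)
  · push_neg at hi
    refine le_trans (norm_add_le _ _) ?_
    have h2 : ‖(T i) ((((N.toFun l : c0Sum E) : lp E ⊤) : ∀ j, E j) i)‖ ≤ C * σ :=
      le_trans ((T i).le_opNorm _)
        (mul_le_mul (hTi i) (hcoord i l) (norm_nonneg _) hC0.le)
    have h3 : C * σ ≤ M := le_max_right _ _
    linarith
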